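/- Let F : T ⥤ S be a triangulated functor with fully faithful right adjoint G. Then F induces a triangle equivalence between the Verdier quotient T / Ker F and S. -/
import Mathlib


open CategoryTheory CategoryTheory.Limits CategoryTheory.Pretriangulated

universe v₁ v₂ u₁ u₂

variable {T : Type u₁} {S : Type u₂} [Category.{v₁} T] [Category.{v₂} S]
  [HasZeroObject T] [HasZeroObject S] [Preadditive T] [Preadditive S]
  [HasShift T ℤ] [HasShift S ℤ]
  [∀ n : ℤ, (CategoryTheory.shiftFunctor T n).Additive]
  [∀ n : ℤ, (CategoryTheory.shiftFunctor S n).Additive]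
  [Pretriangulated T] [Pretriangulated S]

/-- The class of morphisms of `T` whose cone lies in the kernel of `F`; the Verdier
quotient `T / Ker F` is the localization of `T` at this class. -/
def kerVerdierW (F : T ⥤ S) : MorphismProperty T :=
  fun X Y f => ∃ (Z : T) (g : Y ⟶ Z) (h : Z ⟶ X⟦(1 : ℤ)⟧),
    (Triangle.mk f g h ∈ distTriang T) ∧ IsZero (F.obj Z)

/-- Let `F : T ⥤ S` be a triangulated functor with fully faithful right
adjoint `G`.  Then `F` induces a triangle equivalence between the Verdier quotient
`T / Ker F` and `S`; equivalently, `F` is a localization functor with respect to the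
class of morphisms with cone in `Ker F`. -/
theorem verdier_quotient_equivalence_of_fullyFaithful_rightAdjoint
    (F : T ⥤ S) [F.CommShift ℤ] [F.IsTriangulated]
    (G : S ⥤ T) (adj : F ⊣ G) [G.Full] [G.Faithful] :
    F.IsLocalization (kerVerdierW F) := by
  have h : kerVerdierW F = (MorphismProperty.isomorphisms S).inverseImage F := by
    ext X Y f
    constructor
    · rintro ⟨Z, g, hh, hT, hZ⟩
      exact (Triangle.isZero₃_iff_isIso₁ _ (F.map_distinguished _ hT)).1 hZ
    · intro hf
      obtain ⟨Z, g, hh, hT⟩ := distinguished_cocone_triangle f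
      exact ⟨Z, g, hh, hT,
        (Triangle.isZero₃_iff_isIso₁ _ (F.map_distinguished _ hT)).2 hf⟩
  rw [h]
  exact adj.isLocalization
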